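/- Let H be a real Hilbert space with orthogonal projection P onto a closed subspace, and let f, g ∈ H be nonzero. Then |‖Pf‖²/‖f‖² − ‖Pg‖²/‖g‖²| ≤ ‖f − g‖/‖f‖. -/

import Mathlib

set_option maxHeartbeats 1000000

open RealInnerProductSpace

section Aux
variable {H : Type*} [NormedAddCommGroup H] [InnerProductSpace ℝ H] [CompleteSpace H]
  (K : Submodule ℝ H) [CompleteSpace K]

lemma innP (x y : H) : ⟪(K.orthogonalProjection x : H), y⟫ =
    ⟪(K.orthogonalProjection x : H), (K.orthogonalProjection y : H)⟫ := by
  have h0 : ⟪(K.orthogonalProjection x : H), y - (K.orthogonalProjection y : H)⟫ = 0 :=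
    (K.sub_starProjection_mem_orthogonal y) _ (K.orthogonalProjection x).2
  have h1 := inner_sub_right (𝕜 := ℝ) (K.orthogonalProjection x : H) y
    (K.orthogonalProjection y : H)
  linarith [h1, h0]

lemma pythP (x : H) :
    ‖(K.orthogonalProjection x : H)‖ ^ 2 + ‖x - (K.orthogonalProjection x : H)‖ ^ 2
      = ‖x‖ ^ 2 := by
  have hperp : ⟪(K.orthogonalProjection x : H), x - (K.orthogonalProjection x : H)⟫ = 0 :=
    (K.sub_starProjection_mem_orthogonal x) _ (K.orthogonalProjection x).2
  have h := norm_add_sq_real (K.orthogonalProjection x : H) (x - (K.orthogonalProjection x : H))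
  simp only [add_sub_cancel] at h
  rw [hperp] at h
  linarith

lemma keyP (a b : H) (hab : ⟪a, b⟫ = 0) :
    |⟪(K.orthogonalProjection a : H), b⟫| ≤ ‖a‖ * ‖b‖ / 2 := by
  set pa := (K.orthogonalProjection a : H) with hpa
  set pb := (K.orthogonalProjection b : H) with hpb
  have h1 : ⟪pa, b⟫ = ⟪pa, pb⟫ := innP K a b
  have h1' : ⟪pb, a⟫ = ⟪pb, pa⟫ := innP K b a
  have h1'' : ⟪a, pb⟫ = ⟪pa, pb⟫ := by
    have e1 := real_inner_comm pb a
    have e2 := real_inner_comm pb pa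
    linarith [h1']
  have h2 : ⟪a - pa, b - pb⟫ = -⟪pa, pb⟫ := by
    rw [inner_sub_left, inner_sub_right, inner_sub_right]
    rw [h1, h1'', hab]
    ring
  have h3 : |⟪pa, pb⟫| ≤ ‖pa‖ * ‖pb‖ := abs_real_inner_le_norm _ _
  have h4 : |⟪a - pa, b - pb⟫| ≤ ‖a - pa‖ * ‖b - pb‖ := abs_real_inner_le_norm _ _
  have h5 : ‖pa‖ ^ 2 + ‖a - pa‖ ^ 2 = ‖a‖ ^ 2 := pythP K a
  have h6 : ‖pb‖ ^ 2 + ‖b - pb‖ ^ 2 = ‖b‖ ^ 2 := pythP K b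
  rw [h2, abs_neg] at h4
  rw [h1]
  have hcs2 : (‖pa‖ * ‖pb‖ + ‖a - pa‖ * ‖b - pb‖) ^ 2 ≤ (‖a‖ * ‖b‖) ^ 2 := by
    have e : (‖pa‖ * ‖pb‖ + ‖a - pa‖ * ‖b - pb‖) ^ 2
        ≤ (‖pa‖ ^ 2 + ‖a - pa‖ ^ 2) * (‖pb‖ ^ 2 + ‖b - pb‖ ^ 2) := by
      nlinarith [sq_nonneg (‖pa‖ * ‖b - pb‖ - ‖a - pa‖ * ‖pb‖)]
    calc (‖pa‖ * ‖pb‖ + ‖a - pa‖ * ‖b - pb‖) ^ 2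
        ≤ (‖pa‖ ^ 2 + ‖a - pa‖ ^ 2) * (‖pb‖ ^ 2 + ‖b - pb‖ ^ 2) := e
      _ = (‖a‖ * ‖b‖) ^ 2 := by rw [h5, h6]; ring
  have hsumnn : 0 ≤ ‖pa‖ * ‖pb‖ + ‖a - pa‖ * ‖b - pb‖ := by positivity
  have habnn : 0 ≤ ‖a‖ * ‖b‖ := by positivity
  have hcs : ‖pa‖ * ‖pb‖ + ‖a - pa‖ * ‖b - pb‖ ≤ ‖a‖ * ‖b‖ := by
    nlinarith [hcs2, hsumnn, habnn]
  linarith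

end Aux

theorem stmt_4 {H : Type*} [NormedAddCommGroup H] [InnerProductSpace ℝ H] [CompleteSpace H]
    (K : Submodule ℝ H) [CompleteSpace K]
    (f g : H) (hf : f ≠ 0) (hg : g ≠ 0) :
    |‖(K.orthogonalProjection f : H)‖ ^ 2 / ‖f‖ ^ 2 -
        ‖(K.orthogonalProjection g : H)‖ ^ 2 / ‖g‖ ^ 2| ≤ ‖f - g‖ / ‖f‖ := by
  have hF : (0:ℝ) < ‖f‖ := norm_pos_iff.mpr hf
  have hG : (0:ℝ) < ‖g‖ := norm_pos_iff.mpr hg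
  obtain ⟨u, hfu, hu⟩ : ∃ u : H, f = ‖f‖ • u ∧ ‖u‖ = 1 :=
    ⟨‖f‖⁻¹ • f, by rw [smul_smul, mul_inv_cancel₀ hF.ne', one_smul], norm_smul_inv_norm hf⟩
  obtain ⟨v, hgv, hv⟩ : ∃ v : H, g = ‖g‖ • v ∧ ‖v‖ = 1 :=
    ⟨‖g‖⁻¹ • g, by rw [smul_smul, mul_inv_cancel₀ hG.ne', one_smul], norm_smul_inv_norm hg⟩
  set F : ℝ := ‖f‖ with hFdef
  set G : ℝ := ‖g‖ with hGdef
  set pu := (K.orthogonalProjection u : H) with hpu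
  set pv := (K.orthogonalProjection v : H) with hpv
  -- rewrite LHS in terms of u, v
  have hPFu : (K.orthogonalProjection f : H) = F • pu := by
    rw [hfu, map_smul]; rfl
  have hPGv : (K.orthogonalProjection g : H) = G • pv := by
    rw [hgv, map_smul]; rfl
  have hA : ‖(K.orthogonalProjection f : H)‖ ^ 2 / F ^ 2 = ‖pu‖ ^ 2 := by
    rw [hPFu, norm_smul, mul_pow, Real.norm_eq_abs, sq_abs]
    field_simp
  have hB : ‖(K.orthogonalProjection g : H)‖ ^ 2 / G ^ 2 = ‖pv‖ ^ 2 := by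
    rw [hPGv, norm_smul, mul_pow, Real.norm_eq_abs, sq_abs]
    field_simp
  rw [hA, hB]
  -- difference as inner product
  have hD : ‖pu‖ ^ 2 - ‖pv‖ ^ 2 = ⟪(K.orthogonalProjection (u + v) : H), u - v⟫ := by
    have hsum : (K.orthogonalProjection (u + v) : H) = pu + pv := by rw [map_add]; rfl
    rw [hsum, inner_add_left, inner_sub_right, inner_sub_right]
    rw [innP K u u, innP K v v, innP K u v, innP K v u,
      real_inner_self_eq_norm_sq, real_inner_self_eq_norm_sq, real_inner_comm pv pu]
    ring
  have hortho : ⟪u + v, u - v⟫ = 0 := by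
    rw [inner_sub_right, inner_add_left, inner_add_left, real_inner_self_eq_norm_sq,
      real_inner_self_eq_norm_sq, hu, hv, real_inner_comm u v]
    ring
  have hkey : |‖pu‖ ^ 2 - ‖pv‖ ^ 2| ≤ ‖u + v‖ * ‖u - v‖ / 2 := by
    rw [hD]; exact keyP K _ _ hortho
  set c : ℝ := ⟪u, v⟫ with hc_def
  set w : H := u - c • v with hw_def
  have hwsq : ‖w‖ ^ 2 = 1 - c ^ 2 := by
    rw [hw_def, norm_sub_sq_real, inner_smul_right, norm_smul, hu, hv, Real.norm_eq_abs]
    rw [← hc_def]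
    rw [mul_pow, sq_abs]
    ring
  have hprod : (‖u + v‖ * ‖u - v‖) ^ 2 = 4 * ‖w‖ ^ 2 := by
    rw [mul_pow, norm_add_sq_real, norm_sub_sq_real, hu, hv, hwsq, ← hc_def]
    ring
  have hXle : ‖u + v‖ * ‖u - v‖ ≤ 2 * ‖w‖ := by
    nlinarith [hprod, mul_nonneg (norm_nonneg (u + v)) (norm_nonneg (u - v)),
      norm_nonneg w, sq_nonneg (‖u + v‖ * ‖u - v‖ - 2 * ‖w‖),
      sq_nonneg (‖u + v‖ * ‖u - v‖ + 2 * ‖w‖)]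
  have hkey2 : |‖pu‖ ^ 2 - ‖pv‖ ^ 2| ≤ ‖w‖ := by linarith
  -- relate ‖w‖ to ‖f - g‖ / F
  have hwv : ⟪w, v⟫ = 0 := by
    rw [hw_def, inner_sub_left, real_inner_smul_left, real_inner_self_eq_norm_sq, hv, ← hc_def]
    ring
  have hdecomp : f - g = F • w + (F * c - G) • v := by
    rw [hfu, hgv, hw_def]
    module
  have hFw : ‖F • w‖ = F * ‖w‖ := by
    rw [norm_smul, Real.norm_eq_abs, abs_of_pos hF]
  have hpyth : (F * ‖w‖) ^ 2 ≤ ‖f - g‖ ^ 2 := by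
    have hsplit : ‖f - g‖ ^ 2 = ‖F • w‖ ^ 2 + ‖(F * c - G) • v‖ ^ 2 := by
      rw [hdecomp, norm_add_sq_real, inner_smul_left, inner_smul_right, hwv]
      ring
    rw [← hFw]
    have := sq_nonneg ‖(F * c - G) • v‖
    linarith
  have hwle : F * ‖w‖ ≤ ‖f - g‖ := by
    nlinarith [hpyth, norm_nonneg (f - g), mul_nonneg hF.le (norm_nonneg w)]
  calc |‖pu‖ ^ 2 - ‖pv‖ ^ 2| ≤ ‖w‖ := hkey2
    _ ≤ ‖f - g‖ / F := by rw [le_div_iff₀ hF]; linarith [hwle]
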